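/- For every integer k ≥ 2, every integer i with 0 < i < k, and every r ∈ ℤ/nℤ, one has e_i^{(r−i)}(x_1,…,x_m) · h_{k−i}^{(r−i−1)}(x_1,…,x_m) = s_{(k−i,1^i)}^{(r−i−1)}(x_1,…,x_m) + s_{(k−i+1,1^{i−1})}^{(r−i)}(x_1,…,x_m), where (a,1^b) denotes the hook partition with first part a and b further parts equal to 1. -/

import Mathlib

noncomputable section

open Finset MvPolynomial

open Classical in
/-- Loop elementary symmetric function `e_k^{(s)}(x_1, …, x_m)`; zero for `k < 0` (and
automatically zero for `k > m`).  The variable `x_i^{(s)}` is `X (i-1, s)`. -/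
def lE (n m : ℕ) (k : ℤ) (s : ZMod n) : MvPolynomial (Fin m × ZMod n) ℤ :=
  if 0 ≤ k then
    ∑ f ∈ Finset.univ.filter (fun f : Fin k.toNat → Fin m => StrictMono f),
      ∏ j : Fin k.toNat, MvPolynomial.X (f j, s + ((j : ℕ) : ZMod n))
  else 0

open Classical in
/-- Loop complete homogeneous symmetric function `h_k^{(s)}(x_1, …, x_m)`; zero for `k < 0`. -/
def lH (n m : ℕ) (k : ℤ) (s : ZMod n) : MvPolynomial (Fin m × ZMod n) ℤ :=
  if 0 ≤ k then
    ∑ f ∈ Finset.univ.filter (fun f : Fin k.toNat → Fin m => Monotone f),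
      ∏ j : Fin k.toNat, MvPolynomial.X (f j, s - ((j : ℕ) : ZMod n))
  else 0

/-- The set of cells (0-indexed `(row, column)` pairs) of the skew shape `ρ/ν`,
where `ρ i` (resp. `ν i`) is the length of row `i` of the outer (resp. inner) shape,
and only rows `0, …, N-1` are considered. -/
def cellsOf (N : ℕ) (ρ ν : ℕ → ℕ) : Finset (ℕ × ℕ) :=
  (Finset.range N).biUnion fun i => (Finset.Ico (ν i) (ρ i)).image fun j => (i, j)

open Classical in
/-- Loop (skew) Schur function of the skew shape `ρ/ν` (rows `0, …, N-1`, 0-indexed),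
with entries in `Fin K` mapped into the variable columns via `ι : Fin K → Fin M`:
each semistandard filling `T` (rows weakly increasing, columns strictly increasing)
contributes `∏_{(i,j)} x_{ι(T(i,j))}^{(i - j + s)}`. -/
def loopSchur (n M K : ℕ) (ι : Fin K → Fin M) (N : ℕ) (ρ ν : ℕ → ℕ) (s : ZMod n) :
    MvPolynomial (Fin M × ZMod n) ℤ :=
  ∑ T ∈ ((cellsOf N ρ ν).pi fun _ => (Finset.univ : Finset (Fin K))).filter fun T =>
      (∀ (p : ℕ × ℕ) (hp : p ∈ cellsOf N ρ ν) (q : ℕ × ℕ) (hq : q ∈ cellsOf N ρ ν),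
          p.1 = q.1 → p.2 ≤ q.2 → T p hp ≤ T q hq) ∧
      (∀ (p : ℕ × ℕ) (hp : p ∈ cellsOf N ρ ν) (q : ℕ × ℕ) (hq : q ∈ cellsOf N ρ ν),
          p.2 = q.2 → p.1 < q.1 → T p hp < T q hq),
    ∏ p ∈ (cellsOf N ρ ν).attach,
      MvPolynomial.X (ι (T p.1 p.2), ((p.1.1 : ZMod n) - ((p.1.2 : ℕ) : ZMod n) + s))

lemma mem_hookCells {b a' : ℕ} {p : ℕ × ℕ} :
    p ∈ cellsOf (b+1) (fun row => if row = 0 then a'+1 else if row ≤ b then 1 else 0)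
      (fun _ => 0) ↔ (p.1 = 0 ∧ p.2 < a'+1) ∨ (p.1 ≠ 0 ∧ p.1 ≤ b ∧ p.2 = 0) := by
  simp only [cellsOf, mem_biUnion, mem_range, mem_image, mem_Ico, Nat.zero_le, true_and]
  constructor
  · rintro ⟨t, ht, c, hc, rfl⟩
    by_cases h0 : t = 0
    · subst h0; simp only [if_pos rfl] at hc; exact Or.inl ⟨rfl, hc⟩
    · right
      rw [if_neg h0, if_pos (by omega)] at hc
      exact ⟨h0, by omega, by omega⟩
  · rintro (⟨h0, hc⟩ | ⟨h0, hb, hc⟩)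
    · exact ⟨0, by omega, p.2, by simpa using hc, by rw [← h0]⟩
    · exact ⟨p.1, by omega, 0, by rw [if_neg h0, if_pos hb]; omega, by rw [← hc]⟩

lemma hookCells_eq {b a' : ℕ} :
    cellsOf (b+1) (fun row => if row = 0 then a'+1 else if row ≤ b then 1 else 0)
      (fun _ => 0)
    = ((Finset.range (a'+1)).image fun c => ((0:ℕ), c)) ∪
      ((Finset.Icc 1 b).image fun t => (t, (0:ℕ))) := by
  ext p
  rw [mem_hookCells]
  simp only [mem_union, mem_image, mem_range, mem_Icc]
  constructor
  · rintro (⟨h0, hc⟩ | ⟨h0, hb, hc⟩)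
    · exact Or.inl ⟨p.2, hc, by rw [← h0]⟩
    · exact Or.inr ⟨p.1, ⟨by omega, hb⟩, by rw [← hc]⟩
  · rintro (⟨c, hc, rfl⟩ | ⟨t, ht, rfl⟩)
    · exact Or.inl ⟨rfl, hc⟩
    · exact Or.inr ⟨by omega, by omega, rfl⟩

/-- total filling of the plane from a column `u` and a row-rest `v`. -/
def Ttil {m b a' : ℕ} (uv : (Fin (b+1) → Fin m) × (Fin a' → Fin m)) (p : ℕ × ℕ) : Fin m :=
  if h : p.1 = 0 ∧ p.2 ≠ 0 then
    (if h2 : p.2 - 1 < a' then uv.2 ⟨p.2 - 1, h2⟩ else uv.1 ⟨0, Nat.succ_pos b⟩)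
  else
    (if h3 : p.1 < b + 1 then uv.1 ⟨p.1, h3⟩ else uv.1 ⟨0, Nat.succ_pos b⟩)

open Classical in
lemma hook_schur (n m b a' : ℕ) (s : ZMod n) :
    loopSchur n m m id (b+1)
      (fun row => if row = 0 then a'+1 else if row ≤ b then 1 else 0) (fun _ => 0) s
    = ∑ uv ∈ ((Finset.univ.filter (fun u : Fin (b+1) → Fin m => StrictMono u)) ×ˢ
          (Finset.univ.filter (fun v : Fin a' → Fin m => Monotone v))).filter
          (fun uv => ∀ j : Fin a', (j : ℕ) = 0 → uv.1 0 ≤ uv.2 j),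
        (∏ t : Fin (b+1), MvPolynomial.X (uv.1 t, s + ((t : ℕ) : ZMod n))) *
        (∏ j : Fin a', MvPolynomial.X (uv.2 j, s - 1 - ((j : ℕ) : ZMod n))) := by
  rw [loopSchur]
  symm
  set cells := cellsOf (b+1)
      (fun row => if row = 0 then a'+1 else if row ≤ b then 1 else 0) (fun _ => 0) with hcells
  have memCol : ∀ t : Fin (b+1), ((t : ℕ), (0:ℕ)) ∈ cells := by
    intro t
    rw [hcells, mem_hookCells]
    rcases Nat.eq_zero_or_pos (t : ℕ) with h | h
    · exact Or.inl ⟨h, by omega⟩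
    · exact Or.inr ⟨by omega, by omega, rfl⟩
  have memRow : ∀ j : Fin a', ((0:ℕ), (j : ℕ) + 1) ∈ cells := by
    intro j
    rw [hcells, mem_hookCells]
    exact Or.inl ⟨rfl, by omega⟩
  refine Finset.sum_bij' (fun uv _ => fun p _ => Ttil uv p)
    (fun T _ => (fun t => T ((t : ℕ), 0) (memCol t), fun j => T (0, (j : ℕ) + 1) (memRow j)))
    ?_ ?_ ?_ ?_ ?_
  · -- forward membership
    rintro ⟨u, v⟩ huv
    simp only [mem_filter, mem_product, mem_univ, true_and] at huv
    obtain ⟨⟨hu, hv⟩, hcond⟩ := huv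
    rw [mem_filter]
    refine ⟨by simp [Finset.mem_pi], ?_, ?_⟩
    · -- rows weakly increasing
      intro p hp q hq h1 h2
      rw [mem_hookCells] at hp hq
      simp only [Ttil]
      rcases hp with ⟨hp0, hpa⟩ | ⟨hp0, hpb, hpc⟩
      · rcases hq with ⟨hq0, hqa⟩ | ⟨hq0, hqb, hqc⟩
        · by_cases hq2 : q.2 = 0
          · have hpq : p = q := Prod.ext h1 (by omega)
            subst hpq; exact le_refl _
          · rw [dif_pos (show q.1 = 0 ∧ q.2 ≠ 0 from ⟨hq0, hq2⟩),
                dif_pos (show q.2 - 1 < a' by omega)]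
            by_cases hp2 : p.2 = 0
            · rw [dif_neg (show ¬(p.1 = 0 ∧ p.2 ≠ 0) by simp [hp2]),
                  dif_pos (show p.1 < b + 1 by omega)]
              refine le_trans (le_of_eq ?_)
                (le_trans (hcond ⟨0, by omega⟩ rfl) (hv (Fin.mk_le_mk.mpr (by omega))))
              congr 1
              exact Fin.ext (by simpa using hp0)
            · rw [dif_pos (show p.1 = 0 ∧ p.2 ≠ 0 from ⟨hp0, hp2⟩),
                  dif_pos (show p.2 - 1 < a' by omega)]
              exact hv (Fin.mk_le_mk.mpr (by omega))
        · exact (hq0 (by omega)).elim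
      · rcases hq with ⟨hq0, hqa⟩ | ⟨hq0, hqb, hqc⟩
        · exact (hp0 (by omega)).elim
        · have hpq : p = q := Prod.ext h1 (by omega)
          subst hpq; exact le_refl _
    · -- columns strictly increasing
      intro p hp q hq h1 h2
      rw [mem_hookCells] at hp hq
      simp only [Ttil]
      have hq' : q.1 ≠ 0 ∧ q.1 ≤ b ∧ q.2 = 0 := by
        rcases hq with h | h
        · omega
        · exact h
      have hp2 : p.2 = 0 := by omega
      rw [dif_neg (show ¬(p.1 = 0 ∧ p.2 ≠ 0) by simp [hp2]),
          dif_neg (show ¬(q.1 = 0 ∧ q.2 ≠ 0) by simp [hq'.2.2]),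
          dif_pos (show p.1 < b + 1 by omega), dif_pos (show q.1 < b + 1 by omega)]
      exact hu (Fin.mk_lt_mk.mpr h2)
  · -- backward membership
    intro T hT
    rw [mem_filter] at hT
    obtain ⟨hTp, hrow, hcol⟩ := hT
    simp only [mem_filter, mem_product, mem_univ, true_and]
    refine ⟨⟨?_, ?_⟩, ?_⟩
    · intro t t' htt
      exact hcol _ _ _ _ rfl htt
    · intro j j' hjj
      exact hrow _ _ _ _ rfl (Nat.succ_le_succ hjj)
    · intro j hj
      exact hrow _ (memCol 0) _ (memRow j) (by simp) (by simp)
  · -- left inverse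
    rintro ⟨u, v⟩ huv
    refine Prod.ext (funext fun t => ?_) (funext fun j => ?_)
    · simp only [Ttil]
      rw [dif_neg (by simp), dif_pos t.isLt]
    · simp only [Ttil]
      rw [dif_pos (show True ∧ (j:ℕ) + 1 ≠ 0 from ⟨trivial, by omega⟩),
          dif_pos (show (j:ℕ) + 1 - 1 < a' from by simpa using j.isLt)]
      exact congrArg v (Fin.ext (by simp))
  · -- right inverse
    intro T hT
    funext p hp
    have hp' := hp
    rw [mem_hookCells] at hp'
    obtain ⟨p1, p2⟩ := p
    have key : ∀ (q : ℕ × ℕ) (hq : q ∈ cells), q = (p1, p2) → T q hq = T (p1, p2) hp := by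
      rintro q hq rfl
      rfl
    simp only [Ttil]
    by_cases h : p1 = 0 ∧ p2 ≠ 0
    · obtain ⟨h1, h2⟩ := h
      subst h1
      have ha : p2 - 1 < a' := by omega
      rw [dif_pos ⟨rfl, h2⟩, dif_pos ha]
      exact key _ _ (by simp; omega)
    · have hp2 : p2 = 0 := by omega
      have hb : p1 < b + 1 := by omega
      rw [dif_neg h, dif_pos hb]
      exact key _ _ (by simp [hp2])
  · -- monomial equality
    rintro ⟨u, v⟩ huv
    simp only [id_eq]
    have hattach : (∏ p ∈ cells.attach,
        MvPolynomial.X (R := ℤ) (Ttil (u, v) p.1,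
          ((p.1.1 : ZMod n) - ((p.1.2 : ℕ) : ZMod n) + s)))
        = ∏ p ∈ cells, MvPolynomial.X (Ttil (u, v) p,
            ((p.1 : ZMod n) - ((p.2 : ℕ) : ZMod n) + s)) :=
      Finset.prod_attach cells (fun p => MvPolynomial.X (R := ℤ) (Ttil (u, v) p, ((p.1 : ZMod n) - ((p.2 : ℕ) : ZMod n) + s)))
    rw [hattach, hcells, hookCells_eq]
    rw [Finset.prod_union (by
      simp only [Finset.disjoint_left, mem_image, mem_range, mem_Icc]
      rintro p ⟨c, hc, rfl⟩ ⟨t, ht, h⟩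
      rw [Prod.ext_iff] at h
      simp at h
      omega)]
    rw [Finset.prod_image (by rintro c _ c' _ h; simpa using h),
        Finset.prod_image (by rintro t _ t' _ h; simpa using h)]
    rw [Finset.prod_range_succ']
    have hIcc : Finset.Icc 1 b = (Finset.range b).image (· + 1) := by
      ext t
      simp only [mem_Icc, mem_range, mem_image]
      constructor
      · rintro ⟨h1, h2⟩; exact ⟨t - 1, by omega, by omega⟩
      · rintro ⟨x, hx, rfl⟩; omega
    rw [hIcc, Finset.prod_image (by rintro t _ t' _ h; simpa using h)]
    -- now identify the three pieces
    have e1 : (∏ c ∈ Finset.range a',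
        MvPolynomial.X (R := ℤ) (Ttil (u, v) (0, c + 1),
          ((0:ℕ) : ZMod n) - (((c+1 : ℕ)) : ZMod n) + s))
        = ∏ j : Fin a', MvPolynomial.X (v j, s - 1 - ((j : ℕ) : ZMod n)) := by
      rw [← Fin.prod_univ_eq_prod_range]
      refine Finset.prod_congr rfl fun j _ => ?_
      have : Ttil (u, v) (0, (j : ℕ) + 1) = v j := by
        simp only [Ttil]
        rw [dif_pos (show True ∧ (j:ℕ) + 1 ≠ 0 from ⟨trivial, by omega⟩),
            dif_pos (show (j:ℕ) + 1 - 1 < a' from by simpa using j.isLt)]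
        exact congrArg v (Fin.ext (by simp))
      rw [this]
      congr 1
      push_cast
      ring
    have e2 : (MvPolynomial.X (R := ℤ) (Ttil (u, v) (0, 0),
          ((0:ℕ) : ZMod n) - (((0 : ℕ)) : ZMod n) + s))
        = MvPolynomial.X (u 0, s + ((0 : ℕ) : ZMod n)) := by
      have : Ttil (u, v) (0, 0) = u 0 := by
        simp only [Ttil]
        rw [dif_neg (by simp), dif_pos (Nat.succ_pos b)]
        congr 1
      rw [this]
      congr 1
      push_cast
      ring
    have e3 : (∏ t ∈ Finset.range b,
        MvPolynomial.X (R := ℤ) (Ttil (u, v) (t + 1, 0),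
          (((t+1 : ℕ)) : ZMod n) - (((0 : ℕ)) : ZMod n) + s))
        = ∏ t : Fin b, MvPolynomial.X (u (Fin.succ t), s + (((t : ℕ) + 1 : ℕ) : ZMod n)) := by
      rw [← Fin.prod_univ_eq_prod_range]
      refine Finset.prod_congr rfl fun t _ => ?_
      have : Ttil (u, v) ((t : ℕ) + 1, 0) = u (Fin.succ t) := by
        simp only [Ttil]
        rw [dif_neg (by simp), dif_pos (by omega)]
        congr 1
      rw [this]
      congr 1
      push_cast
      ring
    rw [e1, e2, e3, Fin.prod_univ_succ (fun t : Fin (b+1) =>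
      MvPolynomial.X (R := ℤ) (u t, s + ((t : ℕ) : ZMod n)))]
    simp only [Fin.val_succ, Fin.val_zero]
    ring

def myCons {α : Type*} {b : ℕ} (x : α) (w : Fin b → α) : Fin (b+1) → α :=
  fun t => if h : (t : ℕ) = 0 then x else w ⟨(t : ℕ) - 1, by have := t.isLt; omega⟩

lemma myCons_val_zero {α : Type*} {b : ℕ} (x : α) (w : Fin b → α) (t : Fin (b+1))
    (h : (t : ℕ) = 0) : myCons x w t = x := dif_pos h

lemma myCons_val_pos {α : Type*} {b : ℕ} (x : α) (w : Fin b → α) (t : Fin (b+1))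
    (h : (t : ℕ) ≠ 0) (h2 : (t : ℕ) - 1 < b) : myCons x w t = w ⟨(t : ℕ) - 1, h2⟩ := dif_neg h

lemma myCons_zero {α : Type*} {b : ℕ} (x : α) (w : Fin b → α) : myCons x w 0 = x :=
  dif_pos (Fin.val_zero _)

lemma myCons_succ {α : Type*} {b : ℕ} (x : α) (w : Fin b → α) (j : Fin b) :
    myCons x w j.succ = w j := by
  rw [myCons_val_pos x w j.succ (Nat.succ_ne_zero _) (by simp)]
  exact congrArg w (Fin.ext (by simp))


/-- `e_i^{(r−i)} h_{k−i}^{(r−i−1)}` is the sum of the two hook loop Schur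
functions `s_{(k−i,1^i)}^{(r−i−1)}` and `s_{(k−i+1,1^{i−1})}^{(r−i)}`, for `0 < i < k`. -/
theorem loop_eh_hook (n m : ℕ) (hn : 1 < n) (hm : 1 ≤ m) (k i : ℕ) (hk : 2 ≤ k)
    (hi0 : 0 < i) (hik : i < k) (r : ZMod n) :
    lE n m (i : ℤ) (r - (i : ZMod n)) * lH n m ((k - i : ℕ) : ℤ) (r - (i : ZMod n) - 1) =
      loopSchur n m m id (i + 1)
        (fun row => if row = 0 then k - i else if row ≤ i then 1 else 0) (fun _ => 0)
        (r - (i : ZMod n) - 1) +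
      loopSchur n m m id i
        (fun row => if row = 0 then k - i + 1 else if row ≤ i - 1 then 1 else 0) (fun _ => 0)
        (r - (i : ZMod n)) := by
  classical
  obtain ⟨i', rfl⟩ : ∃ i', i = i' + 1 := ⟨i - 1, by omega⟩
  obtain ⟨a', ha'⟩ : ∃ a', k - (i' + 1) = a' + 1 := ⟨k - (i' + 1) - 1, by omega⟩
  rw [ha']
  simp only [Nat.add_sub_cancel]
  rw [lE, lH, if_pos (Int.natCast_nonneg _), if_pos (Int.natCast_nonneg _)]
  simp only [Int.toNat_natCast]
  rw [Finset.sum_mul_sum]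
  rw [← Finset.sum_product']
  rw [← Finset.sum_filter_add_sum_filter_not
      ((Finset.univ.filter (fun f : Fin (i'+1) → Fin m => StrictMono f)) ×ˢ
        (Finset.univ.filter (fun g : Fin (a'+1) → Fin m => Monotone g)))
      (fun fg => fg.1 ⟨0, Nat.succ_pos i'⟩ ≤ fg.2 ⟨0, Nat.succ_pos a'⟩)]
  rw [hook_schur n m (i'+1) a' (r - ((i'+1 : ℕ) : ZMod n) - 1),
      hook_schur n m i' (a'+1) (r - ((i'+1 : ℕ) : ZMod n))]
  rw [add_comm]
  congr 1
  · -- H1 part : pairs with g 0 < f 0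
    symm
    refine Finset.sum_nbij'
      (fun uv => (fun t : Fin (i'+1) => uv.1 ⟨(t : ℕ) + 1, by have := t.isLt; omega⟩,
        myCons (uv.1 0) uv.2))
      (fun fg => (myCons (fg.2 ⟨0, Nat.succ_pos a'⟩) fg.1,
        fun j : Fin a' => fg.2 ⟨(j : ℕ) + 1, by have := j.isLt; omega⟩))
      ?_ ?_ ?_ ?_ ?_
    · -- forward membership
      rintro ⟨u, v⟩ huv
      simp only [mem_filter, mem_product, mem_univ, true_and] at huv ⊢
      obtain ⟨⟨hu, hv⟩, hcond⟩ := huv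
      refine ⟨⟨?_, ?_⟩, ?_⟩
      · intro t t' htt
        exact hu (Fin.mk_lt_mk.mpr (by have := Fin.lt_def.mp htt; omega))
      · intro t t' htt
        have htt' : (t : ℕ) ≤ (t' : ℕ) := Fin.le_def.mp htt
        by_cases h0 : (t : ℕ) = 0
        · rw [myCons_val_zero _ _ _ h0]
          by_cases h0' : (t' : ℕ) = 0
          · rw [myCons_val_zero _ _ _ h0']
          · rw [myCons_val_pos _ _ _ h0' (by have := t'.isLt; omega)]
            exact le_trans (hcond ⟨0, by have := t'.isLt; omega⟩ rfl)
              (hv (Fin.mk_le_mk.mpr (by omega)))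
        · have h0' : (t' : ℕ) ≠ 0 := by omega
          rw [myCons_val_pos _ _ _ h0 (by have := t.isLt; omega),
              myCons_val_pos _ _ _ h0' (by have := t'.isLt; omega)]
          exact hv (Fin.mk_le_mk.mpr (by omega))
      · -- not (f 0 ≤ g 0)
        rw [not_le, myCons_val_zero _ _ _ rfl]
        exact hu (by rw [Fin.lt_def]; simp)
    · -- backward membership
      rintro ⟨f, g⟩ hfg
      simp only [mem_filter, mem_product, mem_univ, true_and, not_le] at hfg
      obtain ⟨⟨hf, hg⟩, hlt⟩ := hfg
      simp only [mem_filter, mem_product, mem_univ, true_and]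
      refine ⟨⟨?_, ?_⟩, ?_⟩
      · intro t t' htt
        have htt' : (t : ℕ) < (t' : ℕ) := Fin.lt_def.mp htt
        have h0' : (t' : ℕ) ≠ 0 := by omega
        rw [myCons_val_pos _ _ _ h0' (by have := t'.isLt; omega)]
        by_cases h0 : (t : ℕ) = 0
        · rw [myCons_val_zero _ _ _ h0]
          exact lt_of_lt_of_le hlt (hf.monotone (Fin.mk_le_mk.mpr (by omega)))
        · rw [myCons_val_pos _ _ _ h0 (by have := t.isLt; omega)]
          exact hf (Fin.mk_lt_mk.mpr (by omega))
      · intro j j' hjj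
        exact hg (Fin.mk_le_mk.mpr (by have := Fin.le_def.mp hjj; omega))
      · intro j hj
        rw [myCons_zero]
        exact hg (Fin.mk_le_mk.mpr (by omega))
    · -- left inverse
      rintro ⟨u, v⟩ huv
      refine Prod.ext (funext fun t => ?_) (funext fun j => ?_)
      · simp only
        by_cases h0 : (t : ℕ) = 0
        · rw [myCons_val_zero _ _ _ h0]
          exact congrArg u (Fin.ext (by simp [h0]))
        · rw [myCons_val_pos _ _ _ h0 (by have := t.isLt; omega)]
          exact congrArg u (Fin.ext (by simp; omega))
      · simp only
        rw [myCons_val_pos _ _ _ (by simp) (by simp)]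
        exact congrArg v (Fin.ext (by simp))
    · -- right inverse
      rintro ⟨f, g⟩ hfg
      refine Prod.ext (funext fun t => ?_) (funext fun j => ?_)
      · simp only
        rw [myCons_val_pos _ _ _ (by simp) (by simp; omega)]
        exact congrArg f (Fin.ext (by simp))
      · simp only
        by_cases h0 : (j : ℕ) = 0
        · rw [myCons_val_zero _ _ _ (by simp [h0]), myCons_zero]
          exact congrArg g (Fin.ext (by simp [h0]))
        · rw [myCons_val_pos _ _ _ (by simp [h0]) (by have := j.isLt; simp; omega)]
          exact congrArg g (Fin.ext (by simp; omega))
    · -- monomial equality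
      rintro ⟨u, v⟩ huv
      simp only
      rw [Fin.prod_univ_succ (fun t : Fin (i'+1+1) =>
        MvPolynomial.X (R := ℤ) (u t, r - ((i'+1 : ℕ) : ZMod n) - 1 + ((t : ℕ) : ZMod n))),
        Fin.prod_univ_succ (fun j : Fin (a'+1) =>
        MvPolynomial.X (R := ℤ) (myCons (u 0) v j,
          r - ((i'+1 : ℕ) : ZMod n) - 1 - ((j : ℕ) : ZMod n)))]
      have c1 : ∀ t : Fin (i'+1),
          MvPolynomial.X (R := ℤ) (u t.succ, r - ((i'+1 : ℕ) : ZMod n) - 1 + ((t.succ : ℕ) : ZMod n))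
          = MvPolynomial.X (u ⟨(t : ℕ) + 1, by have := t.isLt; omega⟩,
              r - ((i'+1 : ℕ) : ZMod n) + ((t : ℕ) : ZMod n)) := by
        intro t
        rw [show u t.succ = u ⟨(t : ℕ) + 1, by have := t.isLt; omega⟩ from
          congrArg u (Fin.ext (by simp))]
        refine congrArg MvPolynomial.X (Prod.ext rfl ?_)
        have h : ((t.succ : ℕ) : ZMod n) = ((t : ℕ) : ZMod n) + 1 := by
          rw [Fin.val_succ]; push_cast; ring
        rw [h]; ring
      have c2 : ∀ j : Fin a',
          MvPolynomial.X (R := ℤ) (myCons (u 0) v j.succ,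
            r - ((i'+1 : ℕ) : ZMod n) - 1 - ((j.succ : ℕ) : ZMod n))
          = MvPolynomial.X (v j, r - ((i'+1 : ℕ) : ZMod n) - 1 - 1 - ((j : ℕ) : ZMod n)) := by
        intro j
        rw [myCons_succ]
        refine congrArg MvPolynomial.X (Prod.ext rfl ?_)
        have h : ((j.succ : ℕ) : ZMod n) = ((j : ℕ) : ZMod n) + 1 := by
          rw [Fin.val_succ]; push_cast; ring
        rw [h]; ring
      rw [Finset.prod_congr rfl (fun t _ => c1 t), Finset.prod_congr rfl (fun j _ => c2 j),
          myCons_zero]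
      simp only [Fin.val_zero, Nat.cast_zero, add_zero, sub_zero]
      ring
  · -- H2 part : pairs with f 0 ≤ g 0
    refine Finset.sum_congr (Finset.filter_congr ?_) (fun _ _ => rfl)
    intro fg hfg
    constructor
    · intro h j hj
      have hj0 : j = ⟨0, Nat.succ_pos a'⟩ := Fin.ext hj
      subst hj0
      refine le_trans (le_of_eq (congrArg fg.1 (Fin.ext (by simp)))) h
    · intro h
      refine le_trans (le_of_eq (congrArg fg.1 (Fin.ext (by simp)))) (h ⟨0, Nat.succ_pos a'⟩ rfl)

end
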